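/- For all n ≥ 1, the recurrence H_{n+1}(x,y|λ) = (log(1+λ)/λ)·x·H_n(x,y|λ) + 2n·(log(1+λ)/λ)·y·H_{n-1}(x,y|λ) holds. -/

import Mathlib

open Real Finset MeasureTheory

noncomputable def dH (l x y : ℝ) (n : ℕ) : ℝ :=
  ∑ k ∈ Finset.range (n / 2 + 1),
    (Nat.factorial n : ℝ) / ((Nat.factorial (n - 2 * k) : ℝ) * (Nat.factorial k : ℝ)) *
      (Real.log (1 + l) / l) ^ (n - k) * x ^ (n - 2 * k) * y ^ k

private noncomputable def Fh (c x y : ℝ) (n k : ℕ) : ℝ :=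
  (Nat.factorial n : ℝ) / ((Nat.factorial (n - 2 * k) : ℝ) * (Nat.factorial k : ℝ)) *
    c ^ (n - k) * x ^ (n - 2 * k) * y ^ k

private lemma Fh_key (c x y : ℝ) (a k : ℕ) :
    Fh c x y (a + 2 * k + 3) (k + 1)
      = c * x * Fh c x y (a + 2 * k + 2) (k + 1)
        + 2 * ((a : ℝ) + 2 * k + 2) * c * y * Fh c x y (a + 2 * k + 1) k := by
  simp only [Fh]
  rw [show a + 2 * k + 3 - 2 * (k + 1) = a + 1 by omega,
      show a + 2 * k + 3 - (k + 1) = a + k + 2 by omega,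
      show a + 2 * k + 2 - 2 * (k + 1) = a by omega,
      show a + 2 * k + 2 - (k + 1) = a + k + 1 by omega,
      show a + 2 * k + 1 - 2 * k = a + 1 by omega,
      show a + 2 * k + 1 - k = a + k + 1 by omega,
      show a + 2 * k + 3 = (a + 2 * k + 2) + 1 by omega,
      Nat.factorial_succ (a + 2 * k + 2),
      show a + 2 * k + 2 = (a + 2 * k + 1) + 1 by omega,
      Nat.factorial_succ (a + 2 * k + 1),
      Nat.factorial_succ a, Nat.factorial_succ k]
  have h1 : (Nat.factorial a : ℝ) ≠ 0 := Nat.cast_ne_zero.mpr (Nat.factorial_ne_zero a)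
  have h2 : (Nat.factorial k : ℝ) ≠ 0 := Nat.cast_ne_zero.mpr (Nat.factorial_ne_zero k)
  have h3 : (Nat.factorial (a + 2 * k + 1) : ℝ) ≠ 0 :=
    Nat.cast_ne_zero.mpr (Nat.factorial_ne_zero _)
  have h4 : ((a : ℝ) + 1) ≠ 0 := by positivity
  have h5 : ((k : ℝ) + 1) ≠ 0 := by positivity
  push_cast
  field_simp
  ring

private lemma Fh_edge (c x y : ℝ) (m : ℕ) :
    Fh c x y (2 * m + 2) (m + 1) = 2 * (2 * (m : ℝ) + 1) * c * y * Fh c x y (2 * m) m := by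
  simp only [Fh]
  rw [show 2 * m + 2 - 2 * (m + 1) = 0 by omega,
      show 2 * m + 2 - (m + 1) = m + 1 by omega,
      show 2 * m - 2 * m = 0 by omega,
      show 2 * m - m = m by omega,
      show 2 * m + 2 = (2 * m + 1) + 1 by omega,
      Nat.factorial_succ (2 * m + 1),
      show 2 * m + 1 = (2 * m) + 1 by omega,
      Nat.factorial_succ (2 * m),
      Nat.factorial_succ m, Nat.factorial_zero]
  have h1 : (Nat.factorial m : ℝ) ≠ 0 := Nat.cast_ne_zero.mpr (Nat.factorial_ne_zero m)
  have h2 : (Nat.factorial (2 * m) : ℝ) ≠ 0 := Nat.cast_ne_zero.mpr (Nat.factorial_ne_zero _)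
  have h5 : ((m : ℝ) + 1) ≠ 0 := by positivity
  push_cast
  field_simp
  ring

private lemma Fh_zero (c x y : ℝ) (n : ℕ) :
    Fh c x y (n + 1) 0 = c * x * Fh c x y n 0 := by
  simp only [Fh]
  simp [Nat.factorial_ne_zero, pow_succ]
  ring

theorem stmt13 (l : ℝ) (hl : 0 < l) (n : ℕ) (hn : 1 ≤ n) (x y : ℝ) :
    dH l x y (n + 1) =
      (Real.log (1 + l) / l) * x * dH l x y n +
        2 * n * (Real.log (1 + l) / l) * y * dH l x y (n - 1) := by
  have hdH : ∀ m : ℕ, dH l x y m = ∑ k ∈ Finset.range (m / 2 + 1),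
      Fh (Real.log (1 + l) / l) x y m k := fun m => rfl
  set c := Real.log (1 + l) / l with hc
  rw [hdH, hdH, hdH]
  rcases Nat.even_or_odd n with ⟨m, hm⟩ | ⟨m, hm⟩
  · -- n = m + m, m ≥ 1
    have hm1 : 1 ≤ m := by omega
    rw [show (n + 1) / 2 + 1 = m + 1 by omega, show n / 2 + 1 = m + 1 by omega,
        show (n - 1) / 2 + 1 = m by omega]
    rw [Finset.sum_range_succ' (fun k => Fh c x y (n + 1) k) m,
        Finset.sum_range_succ' (fun k => Fh c x y n k) m]
    have hterm : ∀ k ∈ Finset.range m,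
        Fh c x y (n + 1) (k + 1)
          = c * x * Fh c x y n (k + 1) + 2 * (n : ℝ) * c * y * Fh c x y (n - 1) k := by
      intro k hk
      simp only [Finset.mem_range] at hk
      obtain ⟨a, rfl⟩ : ∃ a, n = a + 2 * k + 2 := ⟨n - 2 * k - 2, by omega⟩
      rw [show a + 2 * k + 2 + 1 = a + 2 * k + 3 by omega,
          show a + 2 * k + 2 - 1 = a + 2 * k + 1 by omega]
      push_cast
      linear_combination Fh_key c x y a k
    rw [Finset.sum_congr rfl hterm, Finset.sum_add_distrib, Fh_zero c x y n]
    simp only [mul_add, Finset.mul_sum]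
    ring
  · -- n = 2 * m + 1
    rw [show (n + 1) / 2 + 1 = m + 2 by omega, show n / 2 + 1 = m + 1 by omega,
        show (n - 1) / 2 + 1 = m + 1 by omega]
    rw [Finset.sum_range_succ' (fun k => Fh c x y (n + 1) k) (m + 1),
        Finset.sum_range_succ (fun k => Fh c x y (n + 1) (k + 1)) m,
        Finset.sum_range_succ' (fun k => Fh c x y n k) m,
        Finset.sum_range_succ (fun k => Fh c x y (n - 1) k) m]
    have hterm : ∀ k ∈ Finset.range m,
        Fh c x y (n + 1) (k + 1)
          = c * x * Fh c x y n (k + 1) + 2 * (n : ℝ) * c * y * Fh c x y (n - 1) k := by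
      intro k hk
      simp only [Finset.mem_range] at hk
      obtain ⟨a, rfl⟩ : ∃ a, n = a + 2 * k + 2 := ⟨n - 2 * k - 2, by omega⟩
      rw [show a + 2 * k + 2 + 1 = a + 2 * k + 3 by omega,
          show a + 2 * k + 2 - 1 = a + 2 * k + 1 by omega]
      push_cast
      linear_combination Fh_key c x y a k
    have hedge : Fh c x y (n + 1) (m + 1) = 2 * (n : ℝ) * c * y * Fh c x y (n - 1) m := by
      have e1 : n + 1 = 2 * m + 2 := by omega
      have e3 : n - 1 = 2 * m := by omega
      have e4 : (n : ℝ) = 2 * (m : ℝ) + 1 := by push_cast [hm]; ring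
      rw [e1, e3, e4]
      exact Fh_edge c x y m
    rw [Finset.sum_congr rfl hterm, Finset.sum_add_distrib, Fh_zero c x y n, hedge]
    simp only [mul_add, Finset.mul_sum]
    ring
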